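/- Let A be an L-algebra and K ⊆ A a subset. Then the syntactic congruence σ_K is a congruence on A that saturates K, and it is the largest such: every congruence r on A that saturates K satisfies r a b → σ_K a b for all a, b ∈ A. -/

import Mathlib

open FirstOrder Language Structure

/-- An elementary translation of an `L`-algebra `A`. -/
def IsElemTranslation (L : FirstOrder.Language) {A : Type*} [L.Structure A]
    (g : Function.End A) : Prop :=
  ∃ (n : ℕ) (f : L.Functions n) (i : Fin n) (v : Fin n → A),
    g = fun a => funMap f (Function.update v i a)

/-- The translation monoid `M(A)`. -/
def translationMonoid (L : FirstOrder.Language) (A : Type*) [L.Structure A] :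
    Submonoid (Function.End A) :=
  Submonoid.closure {g | IsElemTranslation L g}

/-- The syntactic congruence of `K ⊆ A`. -/
def syntCong (L : FirstOrder.Language) {A : Type*} [L.Structure A] (K : Set A)
    (a b : A) : Prop :=
  ∀ g ∈ translationMonoid L A, (g a ∈ K ↔ g b ∈ K)

/-- The syntactic congruence `σ_K` is a congruence on `A` saturating `K`, and it is
the largest congruence on `A` that saturates `K`. -/
theorem syntCong_isLargest_congruence_saturating (L : FirstOrder.Language) {A : Type*}
    [L.Structure A] (K : Set A) :
    Equivalence (syntCong L K) ∧
    (∀ (n : ℕ) (f : L.Functions n) (v w : Fin n → A),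
        (∀ i, syntCong L K (v i) (w i)) → syntCong L K (funMap f v) (funMap f w)) ∧
    (∀ a b : A, syntCong L K a b → a ∈ K → b ∈ K) ∧
    (∀ r : A → A → Prop, Equivalence r →
        (∀ (n : ℕ) (f : L.Functions n) (v w : Fin n → A),
          (∀ i, r (v i) (w i)) → r (funMap f v) (funMap f w)) →
        (∀ a b : A, r a b → a ∈ K → b ∈ K) →
        ∀ a b : A, r a b → syntCong L K a b) := by
  have hmem : ∀ {n : ℕ} (f : L.Functions n) (i : Fin n) (v : Fin n → A),
      (fun a => funMap f (Function.update v i a)) ∈ translationMonoid L A :=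
    fun f i v => Submonoid.subset_closure ⟨_, f, i, v, rfl⟩
  have trans_pres : ∀ {n : ℕ} (f : L.Functions n) (i : Fin n) (v : Fin n → A) (a b : A),
      syntCong L K a b →
      syntCong L K (funMap f (Function.update v i a)) (funMap f (Function.update v i b)) := by
    intro n f i v a b h g hg
    exact h (g * show Function.End A from fun a => funMap f (Function.update v i a)) (mul_mem hg (hmem f i v))
  refine ⟨⟨fun a g hg => Iff.rfl, fun h g hg => (h g hg).symm,
      fun h1 h2 g hg => (h1 g hg).trans (h2 g hg)⟩, ?_, ?_, ?_⟩
  · intro n f v w h g hg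
    set u : ℕ → Fin n → A := fun k i => if (i : ℕ) < k then w i else v i with hu
    have step : ∀ k (hk : k < n), (g (funMap f (u k)) ∈ K ↔ g (funMap f (u (k+1))) ∈ K) := by
      intro k hk
      have h1 : u k = Function.update (u k) ⟨k, hk⟩ (v ⟨k, hk⟩) := by
        funext i
        rcases eq_or_ne i ⟨k, hk⟩ with rfl | hne
        · simp [u]
        · simp [Function.update_of_ne hne]
      have h2 : u (k+1) = Function.update (u k) ⟨k, hk⟩ (w ⟨k, hk⟩) := by
        funext i
        rcases eq_or_ne i ⟨k, hk⟩ with rfl | hne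
        · simp [u]
        · have hiff : (i : ℕ) < k + 1 ↔ (i : ℕ) < k := by
            constructor
            · intro hi
              rcases Nat.lt_succ_iff_lt_or_eq.1 hi with h' | h'
              · exact h'
              · exact absurd (Fin.ext h') hne
            · exact fun hi => Nat.lt_succ_of_lt hi
          simp [u, Function.update_of_ne hne, hiff]
      rw [h2]
      conv_lhs => rw [h1]
      exact trans_pres f ⟨k, hk⟩ (u k) _ _ (h ⟨k, hk⟩) g hg
    have chain : ∀ k, k ≤ n → (g (funMap f (u 0)) ∈ K ↔ g (funMap f (u k)) ∈ K) := by
      intro k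
      induction k with
      | zero => exact fun _ => Iff.rfl
      | succ k ih => exact fun hk => (ih (Nat.le_of_succ_le hk)).trans (step k hk)
    have h0 : u 0 = v := by funext i; simp [u]
    have hn : u n = w := by funext i; simp [u, i.isLt]
    have := chain n le_rfl
    rwa [h0, hn] at this
  · exact fun a b h ha => (h 1 (one_mem _)).1 ha
  · intro r hre hcong hsat a b hab g hg
    have hg' : ∀ x y, r x y → r (g x) (g y) := by
      refine Submonoid.closure_induction (motive := fun g _ => ∀ x y, r x y → r (g x) (g y))
        ?_ ?_ ?_ hg
      · rintro g ⟨n, f, i, v, rfl⟩ x y hxy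
        refine hcong n f _ _ (fun j => ?_)
        rcases eq_or_ne j i with rfl | hne
        · simpa using hxy
        · simp only [Function.update_of_ne hne]
          exact hre.refl _
      · exact fun x y hxy => hxy
      · intro g₁ g₂ _ _ ih₁ ih₂ x y hxy
        exact ih₁ _ _ (ih₂ _ _ hxy)
    exact ⟨fun hk => hsat _ _ (hg' a b hab) hk, fun hk => hsat _ _ (hg' b a (hre.symm hab)) hk⟩
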